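/- Let d ≥ 1 and let X be a nonempty closed subset of ℝ^d. Then X is convex if and only if for every affine line α in ℝ^d and every real number r ≥ 0, any two points of the tubular sublevel set X_{τ_α,r} = {x ∈ X : dist(x, α) ≤ r} can be joined by a continuous path lying entirely inside X_{τ_α,r} (equivalently, X_{τ_α,r} is path-connected whenever it is nonempty). -/

import Mathlib

open scoped RealInnerProductSpace

/-- The sublevel set of the distance to a convex set is convex. -/
lemma infDist_sublevel_convex {E : Type*} [NormedAddCommGroup E] [NormedSpace ℝ E]
    {s : Set E} (hs : Convex ℝ s) (r : ℝ) :
    Convex ℝ {x : E | Metric.infDist x s ≤ r} := by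
  rcases s.eq_empty_or_nonempty with rfl | hne
  · intro p hp q hq a b ha hb hab
    simp only [Set.mem_setOf_eq, Metric.infDist_empty] at *
    exact hp
  intro p hp q hq a b ha hb hab
  simp only [Set.mem_setOf_eq] at hp hq ⊢
  refine le_of_forall_pos_le_add fun ε hε => ?_
  obtain ⟨p', hp's, hpp'⟩ := (Metric.infDist_lt_iff hne).1
    (lt_of_le_of_lt hp (by linarith : r < r + ε))
  obtain ⟨q', hq's, hqq'⟩ := (Metric.infDist_lt_iff hne).1
    (lt_of_le_of_lt hq (by linarith : r < r + ε))
  have hmem : a • p' + b • q' ∈ s := hs hp's hq's ha hb hab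
  have hle : dist (a • p + b • q) (a • p' + b • q') ≤ a * dist p p' + b * dist q q' := by
    calc dist (a • p + b • q) (a • p' + b • q')
        ≤ dist (a • p) (a • p') + dist (b • q) (b • q') := dist_add_add_le _ _ _ _
      _ = ‖a‖ * dist p p' + ‖b‖ * dist q q' := by rw [dist_smul₀, dist_smul₀]
      _ = a * dist p p' + b * dist q q' := by
          rw [Real.norm_eq_abs, Real.norm_eq_abs, abs_of_nonneg ha, abs_of_nonneg hb]
  have := Metric.infDist_le_dist_of_mem (x := a • p + b • q) hmem
  have h1 : a * dist p p' ≤ a * (r + ε) := by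
    have := dist_nonneg (x := p) (y := p'); nlinarith
  have h2 : b * dist q q' ≤ b * (r + ε) := by
    have := dist_nonneg (x := q) (y := q'); nlinarith
  have h3 : a * (r + ε) + b * (r + ε) = r + ε := by rw [← add_mul, hab, one_mul]
  linarith

/-- A nonempty closed subset `X` of `ℝ^d` is convex if and only if every tubular sublevel
set `{x ∈ X | dist(x, α) ≤ r}` (for an affine line `α` and `r ≥ 0`) is path-connected, in
the sense that any two of its points are joined by a continuous path inside it. -/
theorem convex_iff_tubular_sublevel_pathConnected
    (d : ℕ) (hd : 1 ≤ d) (X : Set (EuclideanSpace ℝ (Fin d)))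
    (hXne : X.Nonempty) (hXclosed : IsClosed X) :
    Convex ℝ X ↔
      ∀ α : AffineSubspace ℝ (EuclideanSpace ℝ (Fin d)),
        Module.finrank ℝ α.direction = 1 →
        ∀ r : ℝ, 0 ≤ r →
          ∀ p₁ ∈ {x ∈ X | Metric.infDist x (α : Set (EuclideanSpace ℝ (Fin d))) ≤ r},
            ∀ p₂ ∈ {x ∈ X | Metric.infDist x (α : Set (EuclideanSpace ℝ (Fin d))) ≤ r},
              JoinedIn {x ∈ X | Metric.infDist x (α : Set (EuclideanSpace ℝ (Fin d))) ≤ r}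
                p₁ p₂ := by
  constructor
  · -- forward: convex X, sublevel sets are convex hence path-connected
    intro hX α hα r hr p₁ hp₁ p₂ hp₂
    have hSconv : Convex ℝ
        {x ∈ X | Metric.infDist x (α : Set (EuclideanSpace ℝ (Fin d))) ≤ r} := by
      have h1 : Convex ℝ {x : EuclideanSpace ℝ (Fin d) |
          Metric.infDist x (α : Set (EuclideanSpace ℝ (Fin d))) ≤ r} :=
        infDist_sublevel_convex (α.convex) r
      intro x hx y hy a b ha hb hab
      exact ⟨hX hx.1 hy.1 ha hb hab, h1 hx.2 hy.2 ha hb hab⟩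
    exact (hSconv.isPathConnected ⟨p₁, hp₁⟩).joinedIn p₁ hp₁ p₂ hp₂
  · -- reverse
    intro h x hx y hy a b ha hb hab
    by_contra hz
    set z := a • x + b • y with hzdef
    -- degenerate cases
    have hb1 : b ≠ 1 := by rintro rfl; simp_all [show a = 0 by linarith]
    have ha1 : a ≠ 1 := by rintro rfl; simp_all [show b = 0 by linarith]
    have ha' : 0 < a := lt_of_le_of_ne ha (by rintro rfl; exact hb1 (by linarith))
    have hb' : 0 < b := lt_of_le_of_ne hb (by rintro rfl; exact ha1 (by linarith))
    have hxy : x ≠ y := by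
      rintro rfl
      apply hz
      have : z = x := by rw [hzdef, ← add_smul, hab, one_smul]
      rw [this]; exact hx
    set v := y - x with hv
    have hvne : v ≠ 0 := sub_ne_zero.2 (Ne.symm hxy)
    have hba : a = 1 - b := by linarith
    have hzxy : z = x + b • v := by rw [hzdef, hv, hba]; module
    -- the line through x and y
    set α := affineSpan ℝ ({x, y} : Set (EuclideanSpace ℝ (Fin d))) with hαdef
    have hxα : x ∈ α := mem_affineSpan ℝ (by simp)
    have hyα : y ∈ α := mem_affineSpan ℝ (by simp)
    have hzα : z ∈ α := by
      have hmem := AffineMap.lineMap_mem_affineSpan_pair (k := ℝ) b x y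
      have hlm : AffineMap.lineMap x y b = z := by
        rw [AffineMap.lineMap_apply, hzxy, hv, vsub_eq_sub, vadd_eq_add]
        abel
      rw [hαdef]
      have : affineSpan ℝ ({x, y} : Set (EuclideanSpace ℝ (Fin d))) =
          affineSpan ℝ {x, y} := rfl
      rwa [hlm] at hmem
    have hαdir : Module.finrank ℝ α.direction = 1 := by
      rw [hαdef, direction_affineSpan, vectorSpan_pair]
      exact finrank_span_singleton (by rw [vsub_eq_sub]; exact sub_ne_zero.2 hxy)
    -- choose the radius
    have hdz : 0 < Metric.infDist z X :=
      (hXclosed.notMem_iff_infDist_pos hXne).1 hz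
    set r := Metric.infDist z X / 2 with hrdef
    have hr : 0 ≤ r := by positivity
    have hxS : x ∈ {w ∈ X | Metric.infDist w (α : Set (EuclideanSpace ℝ (Fin d))) ≤ r} :=
      ⟨hx, by rw [Metric.infDist_zero_of_mem hxα]; exact hr⟩
    have hyS : y ∈ {w ∈ X | Metric.infDist w (α : Set (EuclideanSpace ℝ (Fin d))) ≤ r} :=
      ⟨hy, by rw [Metric.infDist_zero_of_mem hyα]; exact hr⟩
    obtain ⟨γ, hγ⟩ := h α hαdir r hr x hxS y hyS
    -- intermediate value theorem on the coordinate along v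
    set f : ℝ → ℝ := fun t => ⟪γ.extend t - z, v⟫ with hf
    have hfc : Continuous f :=
      ((γ.continuous_extend).sub continuous_const).inner continuous_const
    have hvpos : 0 < ‖v‖ ^ 2 := pow_pos (norm_pos_iff.mpr hvne) 2
    have hf0 : f 0 = -(b * ‖v‖ ^ 2) := by
      have hx0 : γ.extend 0 = x := by rw [Path.extend_zero]
      have hxz : x - z = -(b • v) := by rw [hzxy]; abel
      simp only [hf, hx0, hxz, inner_neg_left, real_inner_smul_left,
        real_inner_self_eq_norm_sq]
    have hf1 : f 1 = a * ‖v‖ ^ 2 := by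
      have hy1 : γ.extend 1 = y := by rw [Path.extend_one]
      have hyz : y - z = a • v := by rw [hzxy, hv, hba]; module
      simp only [hf, hy1, hyz, real_inner_smul_left, real_inner_self_eq_norm_sq]
    have h0mem : (0 : ℝ) ∈ Set.Icc (f 0) (f 1) := by
      constructor
      · rw [hf0]; nlinarith
      · rw [hf1]; nlinarith
    obtain ⟨t, htI, htf⟩ := intermediate_value_Icc (by norm_num : (0:ℝ) ≤ 1)
      hfc.continuousOn h0mem
    -- the point on the path orthogonal to v over z
    have hpS : γ.extend t ∈
        {w ∈ X | Metric.infDist w (α : Set (EuclideanSpace ℝ (Fin d))) ≤ r} := by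
      rw [γ.extend_apply htI]
      exact hγ _
    set p := γ.extend t with hp
    have hperp : ⟪p - z, v⟫ = 0 := htf
    -- every point of α is at least dist p z away from p
    have hkey : ∀ q ∈ (α : Set (EuclideanSpace ℝ (Fin d))), dist p z ≤ dist p q := by
      intro q hq
      have hdir : q -ᵥ z ∈ α.direction := AffineSubspace.vsub_mem_direction hq hzα
      rw [hαdef, direction_affineSpan, vectorSpan_pair] at hdir
      obtain ⟨c, hc⟩ := Submodule.mem_span_singleton.1 hdir
      simp only [vsub_eq_sub] at hc
      have hxyv : x - y = -v := by rw [hv]; abel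
      have hqz : q - z = (-c) • v := by
        rw [← hc, hxyv, smul_neg, neg_smul]
      have hpq : p - q = (p - z) - (-c) • v := by rw [← hqz]; abel
      have expand : ‖(p - z) - (-c) • v‖ ^ 2 =
          ‖p - z‖ ^ 2 - 2 * ⟪p - z, (-c) • v⟫ + ‖(-c) • v‖ ^ 2 :=
        norm_sub_sq_real _ _
      have hsq : ‖p - z‖ ^ 2 ≤ ‖p - q‖ ^ 2 := by
        rw [hpq, expand, real_inner_smul_right, hperp]
        have : (0:ℝ) ≤ ‖(-c) • v‖ ^ 2 := sq_nonneg _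
        linarith
      rw [dist_eq_norm, dist_eq_norm]
      exact (pow_le_pow_iff_left₀ (norm_nonneg _) (norm_nonneg _) two_ne_zero).mp hsq
    have hlow : dist p z ≤ Metric.infDist p (α : Set (EuclideanSpace ℝ (Fin d))) := by
      by_contra hlt
      push_neg at hlt
      obtain ⟨q, hq, hql⟩ := (Metric.infDist_lt_iff ⟨x, hxα⟩).1 hlt
      exact absurd (hkey q hq) (not_le.2 hql)
    have hfar : Metric.infDist z X ≤ dist z p := Metric.infDist_le_dist_of_mem hpS.1
    rw [dist_comm] at hfar
    have hub := hpS.2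
    linarith
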